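/- Let R be a commutative ring and K a perfect complex over R. If K ⊗^L_R κ(p) is acyclic for every prime ideal p of R (where κ(p) is the residue field at p), then K is acyclic, i.e., K ≅ 0 in D(R). -/

import Mathlib

open CategoryTheory CategoryTheory.Limits

open TensorProduct in
/-- Nakayama-type lemma: a finite module whose fibers at all primes vanish is trivial. -/
private lemma nak_aux {R : Type u} [CommRing R] (M : Type u) [AddCommGroup M] [Module R M]
    [Module.Finite R M]
    (h : ∀ p : PrimeSpectrum R,
      Subsingleton (M ⊗[R] IsLocalRing.ResidueField (Localization.AtPrime p.asIdeal))) :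
    Subsingleton M := by
  rw [← Module.support_eq_empty_iff (R := R)]
  by_contra hne
  obtain ⟨p, hp⟩ := Set.nonempty_iff_ne_empty.mpr hne
  have hN : Nontrivial (LocalizedModule p.asIdeal.primeCompl M) := hp
  set S := Localization.AtPrime p.asIdeal with hS
  haveI : Module.Finite S (LocalizedModule p.asIdeal.primeCompl M) :=
    Module.Finite.of_isLocalizedModule p.asIdeal.primeCompl
      (LocalizedModule.mkLinearMap p.asIdeal.primeCompl M)
  set N := LocalizedModule p.asIdeal.primeCompl M with hNdef
  set I := IsLocalRing.maximalIdeal S with hI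
  set κ := IsLocalRing.ResidueField S with hκ
  have hbc : IsBaseChange S (LocalizedModule.mkLinearMap p.asIdeal.primeCompl M) :=
    (isLocalizedModule_iff_isBaseChange p.asIdeal.primeCompl S _).mp inferInstance
  let e1 : M ⊗[R] κ ≃ₗ[R] κ ⊗[R] M := TensorProduct.comm R M κ
  let e2 : κ ⊗[S] (S ⊗[R] M) ≃ₗ[S] κ ⊗[R] M :=
    TensorProduct.AlgebraTensorModule.cancelBaseChange R S S κ M
  let e3 : S ⊗[R] M ≃ₗ[S] N := hbc.equiv
  let e4 : κ ⊗[S] (S ⊗[R] M) ≃ₗ[S] κ ⊗[S] N := e3.lTensor κ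
  let e5 : κ ⊗[S] N ≃ₗ[S] N ⧸ (I • (⊤ : Submodule S N)) :=
    TensorProduct.quotTensorEquivQuotSMul N I
  let e : M ⊗[R] κ ≃ (N ⧸ (I • (⊤ : Submodule S N))) :=
    e1.toEquiv.trans ((e2.toEquiv.symm).trans ((e4.toEquiv).trans e5.toEquiv))
  haveI := h p
  haveI : Subsingleton (N ⧸ (I • (⊤ : Submodule S N))) := e.symm.subsingleton
  have hIT : I • (⊤ : Submodule S N) = ⊤ :=
    Submodule.Quotient.subsingleton_iff.mp this
  have hbot : (⊤ : Submodule S N) = ⊥ :=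
    Submodule.eq_bot_of_le_smul_of_le_jacobson_bot I ⊤
      (Module.finite_def.mp ‹Module.Finite S N›) (le_of_eq hIT.symm)
      (by rw [IsLocalRing.jacobson_eq_maximalIdeal ⊥ bot_ne_top])
  have hzero : ∀ x : N, x = 0 := fun x => by
    have : x ∈ (⊥ : Submodule S N) := hbot ▸ Submodule.mem_top
    simpa using this
  rcases hN.exists_pair_ne with ⟨a, b, hab⟩
  exact hab ((hzero a).trans (hzero b).symm)

open TensorProduct in
/-- The core induction: a complex of finite projective modules, bounded below, whose
fibers at all primes are exact, is exact. -/
private lemma core_aux {R : Type u} [CommRing R]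
    (X : ℤ → Type u) [∀ i, AddCommGroup (X i)] [∀ i, Module R (X i)]
    (hfin : ∀ i, Module.Finite R (X i)) (hproj : ∀ i, Module.Projective R (X i))
    (d : ∀ i, X (i + 1) →ₗ[R] X i)
    (hdd : ∀ i, (d i) ∘ₗ (d (i + 1)) = 0)
    (m : ℤ) (hm : ∀ i, i < m → Subsingleton (X i))
    (hex : ∀ (p : PrimeSpectrum R) (i : ℤ),
      Function.Exact
        ((d (i + 1)).rTensor (IsLocalRing.ResidueField (Localization.AtPrime p.asIdeal)))
        ((d i).rTensor (IsLocalRing.ResidueField (Localization.AtPrime p.asIdeal)))) :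
    ∀ i, LinearMap.ker (d i) = LinearMap.range (d (i + 1)) := by
  set Q : ℤ → Prop := fun i => ∃ (h1 : X (i+1) →ₗ[R] X (i+1+1)) (h0 : X i →ₗ[R] X (i+1)),
    (d (i+1)) ∘ₗ h1 + h0 ∘ₗ (d i) = LinearMap.id with hQdef
  have key : ∀ i, Q i →
      (LinearMap.ker (d (i+1)) = LinearMap.range (d (i+1+1)) ∧ Q (i+1)) := by
    rintro i ⟨h1, h0, hinv⟩
    set g := d (i+1) with hg
    set f := d (i+1+1) with hf
    set φ : X (i+1+1) →ₗ[R] X (i+1+1) := LinearMap.id - h1 ∘ₗ g with hφ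
    have hgf : g ∘ₗ f = 0 := hdd (i+1)
    have hgφ : g ∘ₗ φ = 0 := by
      have hcomp : (h0 ∘ₗ (d i)) ∘ₗ g = 0 := by
        rw [LinearMap.comp_assoc, hdd i, LinearMap.comp_zero]
      calc g ∘ₗ φ = g ∘ₗ LinearMap.id - (g ∘ₗ h1) ∘ₗ g := by
            rw [hφ, LinearMap.comp_sub, LinearMap.comp_assoc]
        _ = g ∘ₗ LinearMap.id - (LinearMap.id - h0 ∘ₗ (d i)) ∘ₗ g := by
            rw [eq_sub_of_add_eq hinv]
        _ = (h0 ∘ₗ (d i)) ∘ₗ g := by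
            rw [LinearMap.sub_comp, LinearMap.id_comp, LinearMap.comp_id]
            abel
        _ = 0 := hcomp
    have hφmem : ∀ x, φ x ∈ LinearMap.ker g := fun x => by
      rw [LinearMap.mem_ker, ← LinearMap.comp_apply, hgφ, LinearMap.zero_apply]
    have hφker : ∀ x ∈ LinearMap.ker g, φ x = x := by
      intro x hx
      rw [LinearMap.mem_ker] at hx
      simp [hφ, hx]
    set ι := (LinearMap.ker g).subtype with hι
    set φ' : X (i+1+1) →ₗ[R] LinearMap.ker g := φ.codRestrict _ hφmem with hφ'
    have hφ'surj : Function.Surjective φ' := fun y =>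
      ⟨y.1, Subtype.ext (hφker y.1 y.2)⟩
    haveI := hfin (i+1+1)
    haveI : Module.Finite R (LinearMap.ker g) := Module.Finite.of_surjective φ' hφ'surj
    have hfmem : ∀ a, f a ∈ LinearMap.ker g := fun a => by
      rw [LinearMap.mem_ker, ← LinearMap.comp_apply, hgf, LinearMap.zero_apply]
    set f' : X (i+1+1+1) →ₗ[R] LinearMap.ker g := f.codRestrict _ hfmem with hf'
    have hιφ' : ι ∘ₗ φ' = φ := rfl
    have hιf' : ι ∘ₗ f' = f := rfl
    have hφ'f : φ' ∘ₗ f = f' := by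
      ext a
      exact hφker _ (hfmem a)
    have hφι : φ' ∘ₗ ι = LinearMap.id := by
      ext y
      exact hφker y.1 y.2
    have hf'surj : Function.Surjective f' := by
      rw [← LinearMap.range_eq_top]
      by_contra hne
      have hsub : Subsingleton ((LinearMap.ker g) ⧸ LinearMap.range f') := by
        haveI : Module.Finite R ((LinearMap.ker g) ⧸ LinearMap.range f') :=
          Module.Finite.quotient R _
        apply nak_aux (R := R)
        intro p
        set κ := IsLocalRing.ResidueField (Localization.AtPrime p.asIdeal) with hκ
        have hsurjT : Function.Surjective (f'.rTensor κ) := by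
          intro w
          have hv : (g.rTensor κ) ((ι.rTensor κ) w) = 0 := by
            rw [← LinearMap.rTensor_comp_apply]
            have hgι : g ∘ₗ ι = 0 := by
              ext x
              exact x.2
            rw [hgι, LinearMap.rTensor_zero, LinearMap.zero_apply]
          obtain ⟨u, hu⟩ := ((hex p (i+1)) ((ι.rTensor κ) w)).mp hv
          refine ⟨u, ?_⟩
          have h1' : f'.rTensor κ u = (φ'.rTensor κ) ((f.rTensor κ) u) := by
            rw [← LinearMap.rTensor_comp_apply, hφ'f]
          rw [h1', hu, ← LinearMap.rTensor_comp_apply, hφι, LinearMap.rTensor_id,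
            LinearMap.id_apply]
        have hmkQT := LinearMap.rTensor_surjective κ
          (Submodule.mkQ_surjective (LinearMap.range f'))
        refine subsingleton_of_forall_eq 0 fun z => ?_
        obtain ⟨w, rfl⟩ := hmkQT z
        obtain ⟨u, rfl⟩ := hsurjT w
        rw [← LinearMap.rTensor_comp_apply]
        have hz : (LinearMap.range f').mkQ ∘ₗ f' = 0 := by
          ext a
          simp
        rw [hz, LinearMap.rTensor_zero, LinearMap.zero_apply]
      exact hne (Submodule.Quotient.subsingleton_iff.mp hsub)
    have hker_eq : LinearMap.ker g = LinearMap.range f := by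
      apply le_antisymm
      · intro x hx
        obtain ⟨a, ha⟩ := hf'surj ⟨x, hx⟩
        exact ⟨a, congrArg Subtype.val ha⟩
      · rintro x ⟨a, rfl⟩
        exact hfmem a
    haveI := hproj (i+1+1)
    obtain ⟨h2, hh2⟩ := Module.projective_lifting_property f' φ' hf'surj
    refine ⟨hker_eq, ⟨h2, h1, ?_⟩⟩
    have hfh2 : f ∘ₗ h2 = φ := by
      rw [← hιf', LinearMap.comp_assoc, hh2, hιφ']
    show f ∘ₗ h2 + h1 ∘ₗ g = LinearMap.id
    rw [hfh2, hφ]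
    abel
  have base : ∀ i, i + 1 < m → Q i := by
    intro i hi
    haveI := hm (i+1) hi
    exact ⟨0, 0, LinearMap.ext fun x => Subsingleton.elim _ _⟩
  have allQ : ∀ i, Q i := by
    have ind : ∀ i, m - 2 ≤ i → Q i := by
      refine Int.le_induction ?_ ?_
      · exact base (m-2) (by omega)
      · intro n _ hQn
        exact (key n hQn).2
    intro i
    rcases lt_or_ge i (m - 2) with hi | hi
    · exact base i (by omega)
    · exact ind i hi
  intro i
  obtain ⟨n, rfl⟩ : ∃ n, i = n + 1 := ⟨i - 1, by omega⟩
  exact (key n (allQ n)).1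

/-- The residue field `κ(p)` at a prime `p`, as an `R`-module. -/
noncomputable abbrev residueFieldMod {R : Type u} [CommRing R] (p : PrimeSpectrum R) :
    ModuleCat.{u} R :=
  ModuleCat.of R (IsLocalRing.ResidueField (Localization.AtPrime p.asIdeal))

/-- Termwise tensor of a chain complex with a module. -/
noncomputable def tensorComplex {R : Type u} [CommRing R]
    (K : ChainComplex (ModuleCat.{u} R) ℤ) (N : ModuleCat.{u} R) :
    ChainComplex (ModuleCat.{u} R) ℤ :=
  ((MonoidalCategory.tensorRight N).mapHomologicalComplex _).obj K

/-- If `K` is a perfect complex over `R` (a bounded complex of finitely generated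
projective modules) such that `K ⊗^L_R κ(p)` is acyclic for every prime `p`, then
`K` itself is acyclic. -/
theorem acyclic_of_acyclic_residueFields {R : Type u} [CommRing R]
    (K : ChainComplex (ModuleCat.{u} R) ℤ)
    (hproj : ∀ i : ℤ, Module.Projective R (K.X i))
    (hfin : ∀ i : ℤ, Module.Finite R (K.X i))
    (hbdd : ∃ m M : ℤ, ∀ i : ℤ, (i < m ∨ M < i) → IsZero (K.X i))
    (h : ∀ (p : PrimeSpectrum R) (i : ℤ),
      IsZero ((tensorComplex K (residueFieldMod p)).homology i)) :
    ∀ i : ℤ, IsZero (K.homology i) := by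
  obtain ⟨m, M, hb⟩ := hbdd
  have hex : ∀ (p : PrimeSpectrum R) (n : ℤ),
      Function.Exact
        ((K.d (n+1+1) (n+1)).hom.rTensor
          (IsLocalRing.ResidueField (Localization.AtPrime p.asIdeal)))
        ((K.d (n+1) n).hom.rTensor
          (IsLocalRing.ResidueField (Localization.AtPrime p.asIdeal))) := by
    intro p n
    have h1 := h p (n+1)
    rw [← HomologicalComplex.exactAt_iff_isZero_homology] at h1
    rw [HomologicalComplex.exactAt_iff' _ (n+1+1) (n+1) n
      (by simp [ChainComplex.prev]) (by rw [ChainComplex.next]; omega)] at h1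
    rw [ShortComplex.moduleCat_exact_iff_range_eq_ker] at h1
    rw [LinearMap.exact_iff]
    exact h1.symm
  intro i
  rw [← HomologicalComplex.exactAt_iff_isZero_homology]
  obtain ⟨n, rfl⟩ : ∃ n, i = n + 1 := ⟨i - 1, by omega⟩
  rw [HomologicalComplex.exactAt_iff' _ (n+1+1) (n+1) n
    (by simp [ChainComplex.prev]) (by rw [ChainComplex.next]; omega)]
  rw [ShortComplex.moduleCat_exact_iff_range_eq_ker]
  have hsub : ∀ j : ℤ, j < m → Subsingleton (K.X j) := by
    intro j hj
    have hz := hb j (Or.inl hj)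
    have hid : (𝟙 (K.X j) : K.X j ⟶ K.X j) = 0 := hz.eq_of_src _ _
    refine subsingleton_of_forall_eq 0 fun x => ?_
    have := DFunLike.congr_fun (congrArg ModuleCat.Hom.hom hid) x
    simpa using this
  exact (core_aux (fun j => K.X j) (fun j => hfin j) (fun j => hproj j)
    (fun j => (K.d (j+1) j).hom)
    (fun j => by rw [← ModuleCat.hom_comp, K.d_comp_d, ModuleCat.hom_zero])
    m hsub hex n).symm
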